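/- In the Linear Pendulum Mode (L̇_G = 0, n · ẍ_G = 0, g = -‖g‖ n), the resultant contact force f = m(ẍ_G - g) is parallel to the vector from the COM G to the ZMP Z scaled by m‖g‖/(d_Z - d_G): f = [m‖g‖/(d_Z - d_G)] (p_Z - p_G), provided d_Z ≠ d_G. -/

import Mathlib

open Matrix

/-- In the Linear Pendulum Mode, the resultant contact force
points from the COM `G` to the ZMP `Z`:
`f = [m‖g‖/(d_Z - d_G)] (p_Z - p_G)`. -/
theorem lpm_force_direction (m gnorm : ℝ) (hm : 0 < m) (hg : 0 < gnorm)
    (n g pG xGdd : Fin 3 → ℝ) (dZ : ℝ)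
    (hn : n ⬝ᵥ n = 1)
    (hgrav : g = -gnorm • n)
    (hLPM1 : n ⬝ᵥ xGdd = 0)
    (f τO : Fin 3 → ℝ)
    (hf : f = m • (xGdd - g))
    (hτ : τO = crossProduct pG f)
    (hnf : n ⬝ᵥ f ≠ 0)
    (pZ : Fin 3 → ℝ)
    (hZ : pZ = (n ⬝ᵥ f)⁻¹ • crossProduct n τO + dZ • ((n ⬝ᵥ f)⁻¹ • f))
    (dG : ℝ) (hdG : dG = n ⬝ᵥ pG)
    (hne : dZ ≠ dG) :
    f = (m * gnorm / (dZ - dG)) • (pZ - pG) := by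
  have hmg : m * gnorm ≠ 0 := by positivity
  have hnf' : n ⬝ᵥ f = m * gnorm := by
    subst hf hgrav
    simp [dotProduct, Fin.sum_univ_three] at hn hLPM1 ⊢
    linear_combination m * hLPM1 + m * gnorm * hn
  have hd : dZ - dG ≠ 0 := sub_ne_zero.mpr hne
  simp [dotProduct, Fin.sum_univ_three] at hnf'
  have key : (m * gnorm) • (pZ - pG) = (dZ - dG) • f := by
    subst hZ hτ hdG
    rw [show n ⬝ᵥ f = m * gnorm by
      simpa [dotProduct, Fin.sum_univ_three] using hnf']
    funext i
    fin_cases i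
    · simp [crossProduct, dotProduct, Fin.sum_univ_three, Matrix.vecHead, Matrix.vecTail]
      field_simp
      linear_combination pG 0 * hnf'
    · simp [crossProduct, dotProduct, Fin.sum_univ_three, Matrix.vecHead, Matrix.vecTail]
      field_simp
      linear_combination pG 1 * hnf'
    · simp [crossProduct, dotProduct, Fin.sum_univ_three, Matrix.vecHead, Matrix.vecTail]
      field_simp
      linear_combination pG 2 * hnf'
  funext i
  have hk := congrFun key i
  simp [Pi.smul_apply, Pi.sub_apply] at hk ⊢
  field_simp
  linear_combination -hk
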